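/- Let p be a prime, F a field containing a primitive p-th root of unity ζ, and a, d ∈ F^×. Set ℰ = F[X,Y]/(X^p − a, Y^p − d), F_a = F[X]/(X^p − a), F_d = F[Y]/(Y^p − d), with their natural F-algebra maps into ℰ. Let B be the image in ℰ of an element of F_a and C the image in ℰ of an element of F_d. Then the following are equivalent: (1) there exist x₀, …, x_{p−1} ∈ ℰ such that in the algebra ℰ[R]/(R^p − B) one has ∏_{ω ∈ μ_p} ( x₀ + x₁ω R + x₂ω²R² + ⋯ + x_{p−1}ω^{p−1}R^{p−1} ) = C; (2) for every field extension K/F and every F-algebra homomorphism θ : ℰ → K, there exist x₀, …, x_{p−1} ∈ K such that in K[R]/(R^p − θ(B)) one has ∏_{ω ∈ μ_p} ( x₀ + x₁ω R + ⋯ + x_{p−1}ω^{p−1}R^{p−1} ) = θ(C). -/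

import Mathlib

/-- The ideal `(X^p − a, Y^p − d)` of `F[X,Y]`. -/
noncomputable def EIdeal (p : ℕ) (F : Type) [Field F] (a d : F) :
    Ideal (MvPolynomial (Fin 2) F) :=
  Ideal.span {MvPolynomial.X 0 ^ p - MvPolynomial.C a,
    MvPolynomial.X 1 ^ p - MvPolynomial.C d}

/-- The étale algebra `ℰ = F[X,Y]/(X^p − a, Y^p − d)`. -/
abbrev Ealg (p : ℕ) (F : Type) [Field F] (a d : F) : Type :=
  MvPolynomial (Fin 2) F ⧸ EIdeal p F a d

noncomputable instance (p : ℕ) (F : Type) [Field F] (a d : F) : CommRing (Ealg p F a d) :=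
  Ideal.Quotient.commRing (EIdeal p F a d)

/-- The image `B` in `ℰ` of an element `B₀` of `F_a = F[X]/(X^p − a)` (given by a
polynomial in the variable `X`). -/
noncomputable def Bel (p : ℕ) (F : Type) [Field F] (a d : F) (B₀ : Polynomial F) :
    Ealg p F a d :=
  Polynomial.aeval (Ideal.Quotient.mk (EIdeal p F a d) (MvPolynomial.X 0)) B₀

/-- The image `C` in `ℰ` of an element `C₀` of `F_d = F[Y]/(Y^p − d)` (given by a
polynomial in the variable `Y`). -/
noncomputable def Cel (p : ℕ) (F : Type) [Field F] (a d : F) (C₀ : Polynomial F) :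
    Ealg p F a d :=
  Polynomial.aeval (Ideal.Quotient.mk (EIdeal p F a d) (MvPolynomial.X 1)) C₀

open Polynomial

namespace Stmt17

lemma eq_zero_of_monic_dvd_degree_lt {R : Type*} [CommRing R] {f r : R[X]} (hf : f.Monic)
    (hdvd : f ∣ r) (hlt : r.degree < f.degree) : r = 0 := by
  obtain ⟨t, rfl⟩ := hdvd
  rcases eq_or_ne t 0 with rfl | ht
  · exact mul_zero f
  · exact absurd hlt (not_lt.mpr (by
      rw [mul_comm, hf.degree_mul]
      exact le_add_of_nonneg_left (zero_le_degree_iff.mpr ht)))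

variable {F : Type} [Field F]

/-- The iso `F[X₀,X₁] ≃ F[Y][X]` with `X₀ ↦ X` (outer) and `X₁ ↦ C X` (inner). -/
noncomputable def phi2 (F : Type) [Field F] :
    MvPolynomial (Fin 2) F ≃ₐ[F] Polynomial (Polynomial F) :=
  (MvPolynomial.finSuccEquiv F 1).trans
    (Polynomial.mapAlgEquiv ((MvPolynomial.finSuccEquiv F 0).trans
      (Polynomial.mapAlgEquiv (MvPolynomial.isEmptyAlgEquiv F (Fin 0)))))

@[simp] lemma phi2_X0 : phi2 F (MvPolynomial.X 0) = X := by
  rw [phi2, AlgEquiv.trans_apply, MvPolynomial.finSuccEquiv_X_zero]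
  simp

@[simp] lemma phi2_X1 : phi2 F (MvPolynomial.X 1) = C X := by
  have h1 : (1 : Fin 2) = Fin.succ 0 := rfl
  rw [phi2, AlgEquiv.trans_apply, h1, MvPolynomial.finSuccEquiv_X_succ]
  rw [Polynomial.coe_mapAlgEquiv, Polynomial.map_C]
  congr 1
  show ((MvPolynomial.finSuccEquiv F 0).trans
      (Polynomial.mapAlgEquiv (MvPolynomial.isEmptyAlgEquiv F (Fin 0)))) (MvPolynomial.X 0) = X
  rw [AlgEquiv.trans_apply, MvPolynomial.finSuccEquiv_X_zero]
  simp

@[simp] lemma phi2_C (c : F) : phi2 F (MvPolynomial.C c) = C (C c) := by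
  have : (MvPolynomial.C c : MvPolynomial (Fin 2) F) = algebraMap F _ c := rfl
  rw [this, AlgEquiv.commutes]
  simp [Polynomial.algebraMap_apply]

variable (p : ℕ) (a d : F)

/-- The ideal corresponding to `EIdeal` on the `F[Y][X]` side. -/
noncomputable def JIdeal : Ideal (Polynomial (Polynomial F)) :=
  Ideal.span {X ^ p - C (C a), C (X ^ p - C d)}

lemma map_EIdeal :
    (EIdeal p F a d).map (phi2 F : MvPolynomial (Fin 2) F →+* Polynomial (Polynomial F)) =
      JIdeal p a d := by
  rw [EIdeal, JIdeal, Ideal.map_span]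
  congr 1
  rw [Set.image_insert_eq, Set.image_singleton]
  congr 1
  · push_cast [map_sub, map_pow]
    rw [show ((phi2 F : MvPolynomial (Fin 2) F →+* Polynomial (Polynomial F))
        (MvPolynomial.X 0)) = X from phi2_X0,
      show ((phi2 F : MvPolynomial (Fin 2) F →+* Polynomial (Polynomial F))
        (MvPolynomial.C a)) = C (C a) from phi2_C a]
  · congr 1
    rw [map_sub, map_pow]
    rw [show ((phi2 F : MvPolynomial (Fin 2) F →+* Polynomial (Polynomial F))
        (MvPolynomial.X 1)) = C X from phi2_X1,
      show ((phi2 F : MvPolynomial (Fin 2) F →+* Polynomial (Polynomial F))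
        (MvPolynomial.C d)) = C (C d) from phi2_C d]
    rw [map_sub, map_pow]

lemma mem_EIdeal_iff (w : MvPolynomial (Fin 2) F) :
    w ∈ EIdeal p F a d ↔ phi2 F w ∈ JIdeal p a d := by
  rw [← map_EIdeal p a d]
  constructor
  · intro hw
    exact Ideal.mem_map_of_mem _ hw
  · intro hw
    have := Ideal.comap_map_of_bijective _ (phi2 F).bijective
      (I := EIdeal p F a d)
    rw [← this]
    exact hw

/-- Double-evaluation character `F[Y][X] → Ω`, `X ↦ u`, `Y ↦ v`. -/
noncomputable def chR {Ω : Type} [CommRing Ω] [Algebra F Ω] (u v : Ω) :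
    Polynomial (Polynomial F) →+* Ω :=
  eval₂RingHom (eval₂RingHom (algebraMap F Ω) v) u

lemma J_le_ker {Ω : Type} [CommRing Ω] [Algebra F Ω] {u v : Ω}
    (hu : u ^ p = algebraMap F Ω a) (hv : v ^ p = algebraMap F Ω d) :
    JIdeal p a d ≤ RingHom.ker (chR u v) := by
  rw [JIdeal, Ideal.span_le]
  intro g hg
  simp only [Set.mem_insert_iff, Set.mem_singleton_iff] at hg
  have hCXw : ∀ w : Polynomial F, chR (F := F) u v (C w)
      = eval₂RingHom (algebraMap F Ω) v w := fun w => eval₂_C _ _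
  have hXu : chR (F := F) u v X = u := eval₂_X _ _
  rcases hg with rfl | rfl
  · rw [SetLike.mem_coe, RingHom.mem_ker, map_sub, map_pow, hXu, hCXw]
    rw [coe_eval₂RingHom, eval₂_C, hu, sub_self]
  · rw [SetLike.mem_coe, RingHom.mem_ker, hCXw, map_sub, map_pow]
    rw [show (eval₂RingHom (algebraMap F Ω) v) X = v from eval₂_X _ _]
    rw [show (eval₂RingHom (algebraMap F Ω) v) (C d) = algebraMap F Ω d from eval₂_C _ _]
    rw [hv, sub_self]

lemma pow_cond {Ω : Type} [CommRing Ω] {ζΩ u : Ω} {c : Ω}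
    (hζΩ : ζΩ ^ p = 1) (hu : u ^ p = c) (i : ℕ) : (ζΩ ^ i * u) ^ p = c := by
  rw [mul_pow, ← pow_mul, mul_comm i p, pow_mul, hζΩ, one_pow, one_mul, hu]

lemma key (hp : p ≠ 0) {Ω : Type} [Field Ω] [Algebra F Ω] {ζΩ α β : Ω}
    (hζΩ : IsPrimitiveRoot ζΩ p) (hα : α ^ p = algebraMap F Ω a)
    (hβ : β ^ p = algebraMap F Ω d)
    (ha : a ≠ 0) (hd : d ≠ 0) (f : Polynomial (Polynomial F))
    (hf : ∀ i ∈ Finset.range p, ∀ j ∈ Finset.range p,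
      chR (ζΩ ^ i * α) (ζΩ ^ j * β) f = 0) :
    f ∈ JIdeal p a d := by
  have hppos : 0 < p := Nat.pos_of_ne_zero hp
  have hinj : Function.Injective (algebraMap F Ω) := (algebraMap F Ω).injective
  have hα0 : α ≠ 0 := by
    intro h; apply ha; apply hinj; rw [map_zero, ← hα, h, zero_pow hp]
  have hβ0 : β ≠ 0 := by
    intro h; apply hd; apply hinj; rw [map_zero, ← hβ, h, zero_pow hp]
  set g1 : Polynomial (Polynomial F) := X ^ p - C (C a) with hg1def
  set g2 : Polynomial F := X ^ p - C d with hg2def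
  have hg1 : g1.Monic := monic_X_pow_sub_C _ hp
  have hg2 : g2.Monic := monic_X_pow_sub_C _ hp
  have hg1deg : g1.degree = p := degree_X_pow_sub_C hppos _
  have hg2deg : g2.degree = p := degree_X_pow_sub_C hppos _
  set r : Polynomial (Polynomial F) := f %ₘ g1 with hrdef
  have hfr : f - r ∈ JIdeal p a d := by
    have hmd : f - r = g1 * (f /ₘ g1) := by
      have h := modByMonic_add_div f g1
      rw [hrdef]; nth_rewrite 1 [← h]; ring
    rw [hmd]
    exact Ideal.mul_mem_right _ _ (Ideal.subset_span (Set.mem_insert _ _))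
  have hrdeg : r.natDegree < p := by
    have h1 : r.degree < g1.degree := degree_modByMonic_lt f hg1
    rw [hg1deg] at h1
    rcases eq_or_ne r 0 with h | h
    · simpa [h] using hppos
    · exact (natDegree_lt_iff_degree_lt h).mpr h1
  set s : Polynomial (Polynomial F) := ∑ k ∈ Finset.range p, C (r.coeff k %ₘ g2) * X ^ k
    with hsdef
  have hrs : r - s ∈ JIdeal p a d := by
    have hrsum : r = ∑ k ∈ Finset.range p, (monomial k) (r.coeff k) := r.as_sum_range' p hrdeg
    have hdiff : r - s = ∑ k ∈ Finset.range p,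
        ((monomial k) (r.coeff k) - C (r.coeff k %ₘ g2) * X ^ k) := by
      rw [Finset.sum_sub_distrib, ← hrsum, hsdef]
    rw [hdiff]
    apply Ideal.sum_mem
    intro k _
    have hterm : (monomial k) (r.coeff k) - C (r.coeff k %ₘ g2) * X ^ k
        = C g2 * (C (r.coeff k /ₘ g2) * X ^ k) := by
      rw [← C_mul_X_pow_eq_monomial, ← sub_mul, ← C_sub, ← mul_assoc, ← C_mul]
      congr 2
      have h := modByMonic_add_div (r.coeff k) g2
      nth_rewrite 1 [← h]; ring
    rw [hterm]
    exact Ideal.mul_mem_right _ _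
      (Ideal.subset_span (Set.mem_insert_of_mem _ rfl))
  have hfs : f - s ∈ JIdeal p a d := by
    have h := Ideal.add_mem _ hfr hrs
    simpa using h
  have hs0 : ∀ i ∈ Finset.range p, ∀ j ∈ Finset.range p,
      chR (ζΩ ^ i * α) (ζΩ ^ j * β) s = 0 := by
    intro i hi j hj
    have hker := J_le_ker p a d (u := ζΩ ^ i * α) (v := ζΩ ^ j * β)
      (pow_cond p hζΩ.pow_eq_one hα i) (pow_cond p hζΩ.pow_eq_one hβ j)
    have h2 : chR (ζΩ ^ i * α) (ζΩ ^ j * β) (f - s) = 0 := hker hfs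
    have h1 := hf i hi j hj
    rw [map_sub, h1, zero_sub, neg_eq_zero] at h2
    exact h2
  -- pass to Ω
  set L : Polynomial F →+* Polynomial Ω := mapRingHom (algebraMap F Ω) with hLdef
  set G : Polynomial (Polynomial Ω) := s.map L with hGdef
  set t : ℕ → Polynomial Ω := fun k => (r.coeff k %ₘ g2).map (algebraMap F Ω) with htdef
  have hGeq : G = ∑ k ∈ Finset.range p, C (t k) * X ^ k := by
    rw [hGdef, hsdef, Polynomial.map_sum]
    refine Finset.sum_congr rfl fun k _ => ?_
    rw [Polynomial.map_mul, Polynomial.map_C, Polynomial.map_pow, Polynomial.map_X]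
    simp [hLdef, htdef, coe_mapRingHom]
  have htdeg : ∀ k, (t k).degree < (p : WithBot ℕ) := by
    intro k
    calc (t k).degree ≤ (r.coeff k %ₘ g2).degree := degree_map_le
      _ < g2.degree := degree_modByMonic_lt _ hg2
      _ = p := hg2deg
  have hnd : ∀ (q : Polynomial Ω), q.degree < (p : WithBot ℕ) → q.natDegree ≤ p - 1 := by
    intro q hq
    rcases eq_or_ne q 0 with rfl | h
    · simp
    · exact Nat.le_pred_of_lt ((natDegree_lt_iff_degree_lt h).mpr hq)
  have hPeval : ∀ i ∈ Finset.range p, ∀ j ∈ Finset.range p,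
      eval (ζΩ ^ j * β) (eval (C (ζΩ ^ i * α)) G) = 0 := by
    intro i hi j hj
    rw [hGdef, eval_map]
    rw [show (eval (ζΩ ^ j * β) (eval₂ L (C (ζΩ ^ i * α)) s))
        = (evalRingHom (ζΩ ^ j * β)) (eval₂ L (C (ζΩ ^ i * α)) s) from rfl]
    rw [hom_eval₂]
    have hcomp : (evalRingHom (ζΩ ^ j * β)).comp L
        = eval₂RingHom (algebraMap F Ω) (ζΩ ^ j * β) := by
      refine RingHom.ext fun c => ?_
      simp [hLdef, coe_evalRingHom, eval_map, coe_eval₂RingHom]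
    rw [hcomp]
    rw [show (evalRingHom (ζΩ ^ j * β)) (C (ζΩ ^ i * α)) = ζΩ ^ i * α by simp]
    exact hs0 i hi j hj
  have hP0 : ∀ i ∈ Finset.range p, eval (C (ζΩ ^ i * α)) G = 0 := by
    intro i hi
    have hPform : eval (C (ζΩ ^ i * α)) G
        = ∑ k ∈ Finset.range p, t k * C ((ζΩ ^ i * α) ^ k) := by
      rw [hGeq, eval_finset_sum]
      refine Finset.sum_congr rfl fun k _ => ?_
      rw [eval_mul, eval_C, eval_pow, eval_X, ← C_pow]
    have hPdeg : (eval (C (ζΩ ^ i * α)) G).natDegree < p := by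
      rw [hPform]
      refine lt_of_le_of_lt (natDegree_sum_le_of_forall_le _ _ fun k _ => ?_)
        (Nat.sub_lt hppos one_pos)
      refine le_trans (natDegree_mul_le) ?_
      simp only [natDegree_C, add_zero]
      exact hnd _ (htdeg k)
    refine eq_zero_of_natDegree_lt_card_of_eval_eq_zero _
      (f := fun j : Fin p => ζΩ ^ (j : ℕ) * β) ?_ ?_ ?_
    · intro j1 j2 h
      refine Fin.ext (hζΩ.injOn_pow_mul hβ0 ?_ ?_ h)
      · simp [j1.isLt]
      · simp [j2.isLt]
    · intro j
      exact hPeval i hi (j : ℕ) (Finset.mem_range.mpr j.isLt)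
    · simpa using hPdeg
  have hG0 : G = 0 := by
    have hGdeg : G.natDegree < p := by
      rw [hGeq]
      refine lt_of_le_of_lt (natDegree_sum_le_of_forall_le _ _ fun k hk => ?_)
        (Nat.sub_lt hppos one_pos)
      refine le_trans (natDegree_mul_le) ?_
      simp only [natDegree_C, zero_add, natDegree_X_pow]
      exact Nat.le_pred_of_lt (Finset.mem_range.mp hk)
    refine eq_zero_of_natDegree_lt_card_of_eval_eq_zero _
      (f := fun i : Fin p => (C (ζΩ ^ (i : ℕ) * α) : Polynomial Ω)) ?_ ?_ ?_
    · intro i1 i2 h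
      have h' := C_injective h
      refine Fin.ext (hζΩ.injOn_pow_mul hα0 ?_ ?_ h')
      · simp [i1.isLt]
      · simp [i2.isLt]
    · intro i
      exact hP0 (i : ℕ) (Finset.mem_range.mpr i.isLt)
    · simpa using hGdeg
  have hs0' : s = 0 := by
    have hLinj : Function.Injective L := Polynomial.map_injective _ hinj
    have := Polynomial.map_injective L hLinj (by rw [← hGdef, hG0, Polynomial.map_zero] :
      s.map L = (0 : Polynomial (Polynomial F)).map L)
    exact this
  rw [← sub_zero f, ← hs0']
  exact hfs


lemma exists_joint_chars (hp : p ≠ 0) {ζ : F} (hζ : IsPrimitiveRoot ζ p)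
    (ha : a ≠ 0) (hd : d ≠ 0) :
    ∃ ψ : ℕ → ℕ → (Ealg p F a d →+* AlgebraicClosure F),
      ∀ z : Ealg p F a d,
        (∀ i ∈ Finset.range p, ∀ j ∈ Finset.range p, ψ i j z = 0) → z = 0 := by
  obtain ⟨α, hα⟩ := IsAlgClosed.exists_pow_nat_eq
    (algebraMap F (AlgebraicClosure F) a) (Nat.pos_of_ne_zero hp)
  obtain ⟨β, hβ⟩ := IsAlgClosed.exists_pow_nat_eq
    (algebraMap F (AlgebraicClosure F) d) (Nat.pos_of_ne_zero hp)
  have hinj : Function.Injective (algebraMap F (AlgebraicClosure F)) :=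
    (algebraMap F (AlgebraicClosure F)).injective
  have hζΩ : IsPrimitiveRoot (algebraMap F (AlgebraicClosure F) ζ) p :=
    hζ.map_of_injective hinj
  refine ⟨fun i j => Ideal.Quotient.lift (EIdeal p F a d)
    ((chR (algebraMap F (AlgebraicClosure F) ζ ^ i * α)
        (algebraMap F (AlgebraicClosure F) ζ ^ j * β)).comp
      (phi2 F : MvPolynomial (Fin 2) F →+* Polynomial (Polynomial F)))
    (fun w hw => ?_), ?_⟩
  · have hJ : phi2 F w ∈ JIdeal p a d := (mem_EIdeal_iff p a d w).mp hw
    exact J_le_ker p a d (pow_cond p hζΩ.pow_eq_one hα i)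
      (pow_cond p hζΩ.pow_eq_one hβ j) hJ
  · intro z hz
    obtain ⟨w, rfl⟩ := Ideal.Quotient.mk_surjective z
    rw [Ideal.Quotient.eq_zero_iff_mem, mem_EIdeal_iff p a d w]
    apply key p a d hp hζΩ hα hβ ha hd
    intro i hi j hj
    have h := hz i hi j hj
    beta_reduce at h
    exact h

lemma nontrivial_Ealg (hp : p ≠ 0) {ζ : F} (hζ : IsPrimitiveRoot ζ p)
    (ha : a ≠ 0) (hd : d ≠ 0) : Nontrivial (Ealg p F a d) := by
  obtain ⟨ψ, -⟩ := exists_joint_chars p a d hp hζ ha hd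
  refine ⟨0, 1, fun h => ?_⟩
  have h1 : (ψ 0 0) 1 = 1 := map_one _
  rw [← h, map_zero] at h1
  exact zero_ne_one h1

lemma isReduced_Ealg (hp : p ≠ 0) {ζ : F} (hζ : IsPrimitiveRoot ζ p)
    (ha : a ≠ 0) (hd : d ≠ 0) : IsReduced (Ealg p F a d) := by
  obtain ⟨ψ, hψ⟩ := exists_joint_chars p a d hp hζ ha hd
  refine ⟨fun z hz => ?_⟩
  obtain ⟨n, hn⟩ := hz
  refine hψ z fun i _ j _ => ?_
  have h1 : (ψ i j z) ^ n = 0 := by rw [← map_pow, hn, map_zero]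
  rcases Nat.eq_zero_or_pos n with rfl | hn0
  · rw [pow_zero] at h1; exact absurd h1 one_ne_zero
  · exact (pow_eq_zero_iff hn0.ne').mp h1

lemma finite_Ealg (hp : p ≠ 0) : Module.Finite F (Ealg p F a d) := by
  have hFT : Algebra.FiniteType F (Ealg p F a d) :=
    Algebra.FiniteType.of_surjective (Ideal.Quotient.mkₐ F _)
      (Ideal.Quotient.mkₐ_surjective F _)
  have halg : ∀ c : F, algebraMap F (Ealg p F a d) c
      = Ideal.Quotient.mk (EIdeal p F a d) (MvPolynomial.C c) := by
    intro c
    rw [show (MvPolynomial.C c : MvPolynomial (Fin 2) F)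
      = algebraMap F (MvPolynomial (Fin 2) F) c from rfl]
    rw [show Ideal.Quotient.mk (EIdeal p F a d) (algebraMap F (MvPolynomial (Fin 2) F) c)
      = Ideal.Quotient.mkₐ F (EIdeal p F a d) (algebraMap F (MvPolynomial (Fin 2) F) c) from rfl]
    rw [AlgHom.commutes]
  have hint : ∀ i : Fin 2,
      IsIntegral F (Ideal.Quotient.mk (EIdeal p F a d) (MvPolynomial.X i)) := by
    intro i
    refine ⟨X ^ p - C (![a, d] i), monic_X_pow_sub_C _ hp, ?_⟩
    rw [← Polynomial.aeval_def, map_sub, map_pow, Polynomial.aeval_X, Polynomial.aeval_C]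
    rw [halg, ← map_pow, ← map_sub, Ideal.Quotient.eq_zero_iff_mem]
    fin_cases i
    · exact Ideal.subset_span (by simp [EIdeal])
    · refine Ideal.subset_span ?_
      simp [EIdeal]
  have htop : Algebra.adjoin F (Set.range fun i : Fin 2 =>
      Ideal.Quotient.mk (EIdeal p F a d) (MvPolynomial.X i)) = ⊤ := by
    have h2 := AlgHom.map_adjoin (Ideal.Quotient.mkₐ F (EIdeal p F a d))
      (Set.range (MvPolynomial.X : Fin 2 → MvPolynomial (Fin 2) F))
    rw [MvPolynomial.adjoin_range_X, Algebra.map_top, ← Set.range_comp] at h2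
    have h3 : (⇑(Ideal.Quotient.mkₐ F (EIdeal p F a d)) ∘ MvPolynomial.X)
        = fun i : Fin 2 => Ideal.Quotient.mk (EIdeal p F a d) (MvPolynomial.X i) := rfl
    rw [h3] at h2
    rw [← h2]
    exact (AlgHom.range_eq_top _).mpr (Ideal.Quotient.mkₐ_surjective F _)
  have hcl : integralClosure F (Ealg p F a d) = ⊤ := by
    refine le_antisymm le_top ?_
    rw [← htop]
    refine Algebra.adjoin_le ?_
    rintro _ ⟨i, rfl⟩
    exact hint i
  have hIntAll : Algebra.IsIntegral F (Ealg p F a d) := by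
    rw [Algebra.isIntegral_def]
    intro z
    have hz : z ∈ integralClosure F (Ealg p F a d) := by rw [hcl]; trivial
    exact hz
  exact Algebra.IsIntegral.finite

noncomputable def LHSpoly (p : ℕ) (ζ : F) (K : Type) [CommRing K] [Algebra F K]
    (x : ℕ → K) : Polynomial K :=
  ∏ k ∈ Finset.range p, ∑ i ∈ Finset.range p,
    C (x i * algebraMap F K ζ ^ (k * i)) * X ^ i

lemma map_LHSpoly {K L : Type} [CommRing K] [Algebra F K] [CommRing L] [Algebra F L]
    (θ : K →ₐ[F] L) (p : ℕ) (ζ : F) (x : ℕ → K) :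
    (LHSpoly p ζ K x).map (θ : K →+* L) = LHSpoly p ζ L (fun i => θ (x i)) := by
  rw [LHSpoly, LHSpoly, Polynomial.map_prod]
  refine Finset.prod_congr rfl fun k _ => ?_
  rw [Polynomial.map_sum]
  refine Finset.sum_congr rfl fun i _ => ?_
  rw [Polynomial.map_mul, Polynomial.map_C, Polynomial.map_pow, Polynomial.map_X]
  congr 1
  rw [RingHom.coe_coe, map_mul, map_pow, AlgHom.commutes]

lemma forward_step {K L : Type} [CommRing K] [Algebra F K] [CommRing L] [Algebra F L]
    (θ : K →ₐ[F] L) (p : ℕ) (ζ : F) (B c : K) (x : ℕ → K)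
    (h : Ideal.Quotient.mk (Ideal.span {X ^ p - C B}) (LHSpoly p ζ K x)
       = Ideal.Quotient.mk (Ideal.span {X ^ p - C B}) (C c)) :
    Ideal.Quotient.mk (Ideal.span {X ^ p - C (θ B)}) (LHSpoly p ζ L fun i => θ (x i))
      = Ideal.Quotient.mk (Ideal.span {X ^ p - C (θ B)}) (C (θ c)) := by
  rw [Ideal.Quotient.eq] at h ⊢
  rw [Ideal.mem_span_singleton] at h ⊢
  obtain ⟨t, ht⟩ := h
  refine ⟨t.map (θ : K →+* L), ?_⟩
  have h2 := congrArg (Polynomial.map (θ : K →+* L)) ht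
  rw [Polynomial.map_sub, Polynomial.map_mul, Polynomial.map_sub, Polynomial.map_pow,
    Polynomial.map_X, Polynomial.map_C, map_LHSpoly, Polynomial.map_C] at h2
  exact h2

set_option maxHeartbeats 1000000 in
lemma backward (p : ℕ) (hp : p.Prime) {ζ : F} (hζ : IsPrimitiveRoot ζ p)
    (ha : a ≠ 0) (hd : d ≠ 0) (B c : Ealg p F a d)
    (h2 : ∀ (K : Type) [Field K] [Algebra F K] (θ : Ealg p F a d →ₐ[F] K),
      ∃ x : ℕ → K,
        Ideal.Quotient.mk (Ideal.span {X ^ p - C (θ B)}) (LHSpoly p ζ K x)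
          = Ideal.Quotient.mk (Ideal.span {X ^ p - C (θ B)}) (C (θ c))) :
    ∃ x : ℕ → Ealg p F a d,
      Ideal.Quotient.mk (Ideal.span {X ^ p - C B}) (LHSpoly p ζ _ x)
        = Ideal.Quotient.mk (Ideal.span {X ^ p - C B}) (C c) := by
  classical
  haveI hFin : Module.Finite F (Ealg p F a d) := finite_Ealg p a d hp.ne_zero
  haveI : IsArtinianRing (Ealg p F a d) := IsArtinianRing.of_finite F _
  haveI : IsReduced (Ealg p F a d) := isReduced_Ealg p a d hp.ne_zero hζ ha hd
  haveI : Nontrivial (Ealg p F a d) := nontrivial_Ealg p a d hp.ne_zero hζ ha hd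
  haveI : Finite {I : Ideal (Ealg p F a d) | I.IsMaximal} :=
    (IsArtinianRing.setOfPred_isMaximal_finite _).to_subtype
  haveI hTS : ∀ I : {I : Ideal (Ealg p F a d) | I.IsMaximal},
      ∀ J : Ideal (Polynomial (Ealg p F a d ⧸ I.1)), J.IsTwoSided :=
    fun I J => ⟨fun b ha => by convert J.mul_mem_left b ha using 1; exact mul_comm (_ : Polynomial (Ealg p F a d ⧸ I.1)) _⟩
  have hsol : ∀ I : {I : Ideal (Ealg p F a d) | I.IsMaximal},
      ∃ x : ℕ → (Ealg p F a d ⧸ I.1),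
        Ideal.Quotient.mk (Ideal.span {X ^ p - C (Ideal.Quotient.mkₐ F I.1 B)})
            (LHSpoly p ζ _ x)
          = Ideal.Quotient.mk (Ideal.span {X ^ p - C (Ideal.Quotient.mkₐ F I.1 B)})
            (C (Ideal.Quotient.mkₐ F I.1 c)) := by
    intro I
    haveI hImax : I.1.IsMaximal := I.2
    letI : Field (Ealg p F a d ⧸ I.1) := Ideal.Quotient.field I.1
    exact h2 _ (Ideal.Quotient.mkₐ F I.1)
  choose xI hxI using hsol
  have hco : Pairwise fun I J : {I : Ideal (Ealg p F a d) | I.IsMaximal} =>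
      IsCoprime I.1 J.1 := by
    intro I J hIJ
    have hI : I.1.IsMaximal := I.2
    have hJ : J.1.IsMaximal := J.2
    exact Ideal.isCoprime_iff_sup_eq.mpr
      (Ideal.IsMaximal.coprime_of_ne hI hJ (fun h => hIJ (Subtype.ext h)))
  have hsur : ∀ i : ℕ, ∃ r : Ealg p F a d, ∀ I : {I : Ideal (Ealg p F a d) | I.IsMaximal},
      Ideal.Quotient.mk I.1 r = xI I i := by
    intro i
    obtain ⟨r, hr⟩ := Ideal.pi_quotient_surjective hco (fun I => xI I i)
    exact ⟨r, fun I => hr I⟩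
  choose x hx using hsur
  refine ⟨x, ?_⟩
  rw [Ideal.Quotient.eq, Ideal.mem_span_singleton]
  set D : Polynomial (Ealg p F a d) := LHSpoly p ζ _ x - C c with hD
  set fB : Polynomial (Ealg p F a d) := X ^ p - C B with hfB
  have hfBm : fB.Monic := monic_X_pow_sub_C _ hp.ne_zero
  have hr0 : ∀ I : {I : Ideal (Ealg p F a d) | I.IsMaximal},
      (D %ₘ fB).map (Ideal.Quotient.mk I.1) = 0 := by
    intro I
    haveI hImax : I.1.IsMaximal := I.2
    have hcoe : ((Ideal.Quotient.mkₐ F I.1 : Ealg p F a d →ₐ[F] Ealg p F a d ⧸ I.1) :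
        Ealg p F a d →+* Ealg p F a d ⧸ I.1) = Ideal.Quotient.mk I.1 :=
      RingHom.ext fun z => by rw [RingHom.coe_coe, Ideal.Quotient.mkₐ_eq_mk]
    have hmapθ := map_LHSpoly (Ideal.Quotient.mkₐ F I.1) p ζ x
    rw [hcoe] at hmapθ
    have hxI' : ∀ i, Ideal.Quotient.mkₐ F I.1 (x i) = xI I i := fun i => by
      rw [Ideal.Quotient.mkₐ_eq_mk]; exact hx i I
    have hsame : LHSpoly p ζ (Ealg p F a d ⧸ I.1) (fun i => Ideal.Quotient.mkₐ F I.1 (x i))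
        = LHSpoly p ζ _ (xI I) := by
      rw [LHSpoly, LHSpoly]
      exact Finset.prod_congr rfl fun k _ => Finset.sum_congr rfl fun i _ => by rw [hxI' i]
    have hmapD : D.map (Ideal.Quotient.mk I.1)
        = LHSpoly p ζ _ (xI I) - C (Ideal.Quotient.mkₐ F I.1 c) := by
      rw [hD, Polynomial.map_sub, hmapθ, hsame, Polynomial.map_C, Ideal.Quotient.mkₐ_eq_mk]
    have hdvd : (X ^ p - C (Ideal.Quotient.mkₐ F I.1 B)) ∣ D.map (Ideal.Quotient.mk I.1) := by
      rw [hmapD]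
      exact Ideal.mem_span_singleton.mp (Ideal.Quotient.eq.mp (hxI I))
    have hfBmap : fB.map (Ideal.Quotient.mk I.1)
        = X ^ p - C (Ideal.Quotient.mkₐ F I.1 B) := by
      rw [hfB, Polynomial.map_sub, Polynomial.map_pow, Polynomial.map_X, Polynomial.map_C,
        Ideal.Quotient.mkₐ_eq_mk]
    have hmd : D %ₘ fB = D - fB * (D /ₘ fB) := eq_sub_of_add_eq (modByMonic_add_div D fB)
    have hdvd2 : (X ^ p - C (Ideal.Quotient.mkₐ F I.1 B))
        ∣ (D %ₘ fB).map (Ideal.Quotient.mk I.1) := by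
      rw [hmd, Polynomial.map_sub, Polynomial.map_mul, hfBmap]
      exact dvd_sub hdvd (Dvd.intro _ rfl)
    have hlt : ((D %ₘ fB).map (Ideal.Quotient.mk I.1)).degree
        < (X ^ p - C (Ideal.Quotient.mkₐ F I.1 B)).degree := by
      calc ((D %ₘ fB).map (Ideal.Quotient.mk I.1)).degree ≤ (D %ₘ fB).degree := degree_map_le
        _ < fB.degree := degree_modByMonic_lt D hfBm
        _ = _ := by rw [hfB, degree_X_pow_sub_C hp.pos, degree_X_pow_sub_C hp.pos]
    exact eq_zero_of_monic_dvd_degree_lt (monic_X_pow_sub_C _ hp.ne_zero) hdvd2 hlt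
  have hcoeff : ∀ n, (D %ₘ fB).coeff n = 0 := by
    intro n
    have hnil : IsNilpotent ((D %ₘ fB).coeff n) := by
      rw [nilpotent_iff_mem_prime]
      intro J hJ
      have hJm : J.IsMaximal := (IsArtinianRing.isPrime_iff_isMaximal J).mp hJ
      have h := hr0 ⟨J, hJm⟩
      have h2 := congrArg (fun q => Polynomial.coeff q n) h
      simp only [Polynomial.coeff_map, Polynomial.coeff_zero] at h2
      exact Ideal.Quotient.eq_zero_iff_mem.mp h2
    exact hnil.eq_zero
  have hmod0 : D %ₘ fB = 0 := Polynomial.ext fun n => by rw [hcoeff n, coeff_zero]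
  refine ⟨D /ₘ fB, ?_⟩
  show D = fB * (D /ₘ fB)
  have h := modByMonic_add_div D fB
  rw [hmod0, zero_add] at h
  exact h.symm

end Stmt17

/-- Let `p` be a prime, `F` a field containing a primitive `p`-th root of unity `ζ`, and
`a, d ∈ F^×`. Let `B` be the image in `ℰ = F[X,Y]/(X^p − a, Y^p − d)` of an element of
`F_a = F[X]/(X^p − a)` and `C` the image of an element of `F_d = F[Y]/(Y^p − d)`.
The following are equivalent:
(1) there are `x₀, …, x_{p−1} ∈ ℰ` with
`∏_{ω ∈ μ_p} (x₀ + x₁ωR + x₂ω²R² + ⋯ + x_{p−1}ω^{p−1}R^{p−1}) = C` in `ℰ[R]/(R^p − B)`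
(where `μ_p = {ζ^k : 0 ≤ k < p}`);
(2) for every field extension `K/F` and every `F`-algebra homomorphism `θ : ℰ → K`, there
are `x₀, …, x_{p−1} ∈ K` with
`∏_{ω ∈ μ_p} (x₀ + x₁ωR + ⋯ + x_{p−1}ω^{p−1}R^{p−1}) = θ(C)` in `K[R]/(R^p − θ(B))`. -/
theorem stmt_17 (p : ℕ) (hp : p.Prime) (F : Type) [Field F]
    (ζ : F) (hζ : IsPrimitiveRoot ζ p) (a d : F) (ha : a ≠ 0) (hd : d ≠ 0)
    (B₀ C₀ : Polynomial F) :
    (∃ x : ℕ → Ealg p F a d,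
      ∏ k ∈ Finset.range p,
        Ideal.Quotient.mk
          (Ideal.span {Polynomial.X ^ p - Polynomial.C (Bel p F a d B₀)})
          (∑ i ∈ Finset.range p,
            Polynomial.C (x i * algebraMap F (Ealg p F a d) ζ ^ (k * i)) *
              Polynomial.X ^ i) =
        Ideal.Quotient.mk
          (Ideal.span {Polynomial.X ^ p - Polynomial.C (Bel p F a d B₀)})
          (Polynomial.C (Cel p F a d C₀))) ↔
    (∀ (K : Type) [Field K] [Algebra F K] (θ : Ealg p F a d →ₐ[F] K),
      ∃ x : ℕ → K,
      ∏ k ∈ Finset.range p,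
        Ideal.Quotient.mk
          (Ideal.span {Polynomial.X ^ p - Polynomial.C (θ (Bel p F a d B₀))})
          (∑ i ∈ Finset.range p,
            Polynomial.C (x i * algebraMap F K ζ ^ (k * i)) * Polynomial.X ^ i) =
        Ideal.Quotient.mk
          (Ideal.span {Polynomial.X ^ p - Polynomial.C (θ (Bel p F a d B₀))})
          (Polynomial.C (θ (Cel p F a d C₀)))) := by
  constructor
  · rintro ⟨x, hx⟩ K _K _A θ
    refine ⟨fun i => θ (x i), ?_⟩
    have hx' : Ideal.Quotient.mk
        (Ideal.span {Polynomial.X ^ p - Polynomial.C (Bel p F a d B₀)})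
        (Stmt17.LHSpoly p ζ _ x)
        = Ideal.Quotient.mk
          (Ideal.span {Polynomial.X ^ p - Polynomial.C (Bel p F a d B₀)})
          (Polynomial.C (Cel p F a d C₀)) := by
      simp only [Stmt17.LHSpoly, map_prod]
      exact hx
    have h := Stmt17.forward_step θ p ζ _ _ x hx'
    simp only [Stmt17.LHSpoly, map_prod] at h
    exact h
  · intro h2
    have h2' : ∀ (K : Type) [Field K] [Algebra F K] (θ : Ealg p F a d →ₐ[F] K),
        ∃ x : ℕ → K,
          Ideal.Quotient.mk
            (Ideal.span {Polynomial.X ^ p - Polynomial.C (θ (Bel p F a d B₀))})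
            (Stmt17.LHSpoly p ζ K x)
          = Ideal.Quotient.mk
            (Ideal.span {Polynomial.X ^ p - Polynomial.C (θ (Bel p F a d B₀))})
            (Polynomial.C (θ (Cel p F a d C₀))) := by
      intro K _ _ θ
      obtain ⟨x, hx⟩ := h2 K θ
      refine ⟨x, ?_⟩
      simp only [Stmt17.LHSpoly, map_prod]
      exact hx
    obtain ⟨x, hx⟩ := Stmt17.backward a d p hp hζ ha hd (Bel p F a d B₀) (Cel p F a d C₀) h2'
    refine ⟨x, ?_⟩
    simp only [Stmt17.LHSpoly, map_prod] at hx
    exact hx
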